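/- Let D be an infinite division ring with infinitely many conjugacy classes, and let p ∈ D[x] be a nonconstant polynomial. Then the image of p evaluated on D is infinite. -/
import Mathlib

open Polynomial

/-- Right factor theorem helper: `X^n = q * (X - C a) + C (a^n)` for some `q`. -/
lemma pow_eq_mul_X_sub_C_add {D : Type*} [Ring D] (a : D) :
    ∀ n : ℕ, ∃ q : Polynomial D, (X : Polynomial D) ^ n = q * (X - C a) + C (a ^ n) := by
  intro n
  induction n with
  | zero => exact ⟨0, by simp⟩
  | succ n ih =>
    obtain ⟨q, hq⟩ := ih
    refine ⟨q * X + C (a ^ n), ?_⟩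
    have h1 : (X : Polynomial D) ^ (n + 1) = X ^ n * X := by rw [pow_succ]
    rw [h1, hq]
    have hXC : (X - C a) * X = X * (X - C a) := (X_mul).symm
    have hCX : (C (a ^ n) : Polynomial D) * X = C (a ^ n) * (X - C a) + C (a ^ (n + 1)) := by
      rw [mul_sub, ← C_mul, ← pow_succ]
      noncomm_ring
    calc (q * (X - C a) + C (a ^ n)) * X
        = q * ((X - C a) * X) + C (a ^ n) * X := by noncomm_ring
      _ = q * X * (X - C a) + (C (a ^ n) * (X - C a) + C (a ^ (n + 1))) := by
          rw [hXC, hCX]; noncomm_ring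
      _ = (q * X + C (a ^ n)) * (X - C a) + C (a ^ (n + 1)) := by noncomm_ring

/-- Noncommutative right factor theorem. -/
lemma exists_right_factor {D : Type*} [Ring D] (p : Polynomial D) (a : D) :
    ∃ q : Polynomial D, p = q * (X - C a) + C (p.eval a) := by
  induction p using Polynomial.induction_on' with
  | add p r hp hr =>
    obtain ⟨qp, hqp⟩ := hp
    obtain ⟨qr, hqr⟩ := hr
    refine ⟨qp + qr, ?_⟩
    rw [eval_add, C_add]
    calc p + r = (qp * (X - C a) + C (p.eval a)) + (qr * (X - C a) + C (r.eval a)) := by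
          rw [← hqp, ← hqr]
      _ = (qp + qr) * (X - C a) + (C (p.eval a) + C (r.eval a)) := by noncomm_ring
  | monomial n d =>
    obtain ⟨q, hq⟩ := pow_eq_mul_X_sub_C_add a n
    refine ⟨C d * q, ?_⟩
    rw [eval_monomial, ← C_mul_X_pow_eq_monomial, hq, mul_add, ← mul_assoc, ← C_mul]

/-- Key conjugation identity: evaluating `q * (X - C a)` at `b ≠ a` gives
`q(c) * (b - a)` where `c = (b-a) b (b-a)⁻¹` is conjugate to `b`. -/
lemma eval_mul_X_sub_C_eq {D : Type*} [DivisionRing D] (q : Polynomial D) {a b : D}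
    (hab : b ≠ a) :
    (q * (X - C a)).eval b = q.eval ((b - a) * b * (b - a)⁻¹) * (b - a) := by
  have hg : b - a ≠ 0 := sub_ne_zero.mpr hab
  set c := (b - a) * b * (b - a)⁻¹ with hc
  have key : ∀ n : ℕ, c ^ n * (b - a) = (b - a) * b ^ n := by
    intro n
    induction n with
    | zero => simp
    | succ n ih =>
      calc c ^ (n + 1) * (b - a) = c * (c ^ n * (b - a)) := by
            rw [pow_succ', mul_assoc]
        _ = (b - a) * b * ((b - a)⁻¹ * ((b - a) * b ^ n)) := by
            rw [ih, hc, mul_assoc]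
        _ = (b - a) * b ^ (n + 1) := by
            rw [← mul_assoc (b - a)⁻¹, inv_mul_cancel₀ hg, one_mul, pow_succ', mul_assoc]
  induction q using Polynomial.induction_on' with
  | add p r hp hr =>
    rw [add_mul, eval_add, eval_add, hp, hr, add_mul]
  | monomial n d =>
    have h1 : (monomial n d : Polynomial D) * (X - C a)
        = monomial (n + 1) d - monomial n (d * a) := by
      rw [mul_sub, monomial_mul_C]
      congr 1
      rw [← C_mul_X_pow_eq_monomial, ← C_mul_X_pow_eq_monomial, mul_assoc, ← pow_succ]
    rw [h1, eval_sub, eval_monomial, eval_monomial, eval_monomial]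
    calc d * b ^ (n + 1) - d * a * b ^ n = d * ((b - a) * b ^ n) := by
          rw [pow_succ']; noncomm_ring
      _ = d * (c ^ n * (b - a)) := by rw [key]
      _ = d * c ^ n * (b - a) := by rw [mul_assoc]

/-- Gordon–Motzkin: roots of a nonzero polynomial over a division ring lie in
finitely many conjugacy classes. -/
lemma gordon_motzkin {D : Type*} [DivisionRing D] :
    ∀ n : ℕ, ∀ p : Polynomial D, p ≠ 0 → p.natDegree = n →
      (ConjClasses.mk '' {a : D | p.IsRoot a}).Finite := by
  intro n
  induction n using Nat.strong_induction_on with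
  | _ n ih =>
    intro p hp hdeg
    by_cases hroot : ∃ a : D, p.IsRoot a
    · obtain ⟨a, ha⟩ := hroot
      obtain ⟨q, hq⟩ := exists_right_factor p a
      rw [ha.eq_zero, C_0, add_zero] at hq
      have hqne : q ≠ 0 := by
        rintro rfl
        rw [zero_mul] at hq
        exact hp hq
      have hdegq : q.natDegree + 1 = n := by
        have := Polynomial.natDegree_mul' (p := q) (q := X - C a)
          (by simp [Polynomial.leadingCoeff_X_sub_C, Polynomial.leadingCoeff_ne_zero.mpr hqne])
        rw [← hq, hdeg] at this
        simp [Polynomial.natDegree_X_sub_C] at this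
        omega
      have hsub : ConjClasses.mk '' {x : D | p.IsRoot x} ⊆
          insert (ConjClasses.mk a) (ConjClasses.mk '' {x : D | q.IsRoot x}) := by
        rintro _ ⟨b, hb, rfl⟩
        by_cases hba : b = a
        · subst hba; exact Set.mem_insert _ _
        · right
          have hg : b - a ≠ 0 := sub_ne_zero.mpr hba
          have heval : q.eval ((b - a) * b * (b - a)⁻¹) * (b - a) = 0 := by
            rw [← eval_mul_X_sub_C_eq q hba, ← hq]; exact hb
          have hc : q.IsRoot ((b - a) * b * (b - a)⁻¹) := by
            rcases mul_eq_zero.mp heval with h | h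
            · exact h
            · exact absurd h hg
          refine ⟨_, hc, ?_⟩
          rw [ConjClasses.mk_eq_mk_iff_isConj]
          refine ⟨Units.mk0 (b - a)⁻¹ (inv_ne_zero hg), ?_⟩
          show (b - a)⁻¹ * ((b - a) * b * (b - a)⁻¹) = b * (b - a)⁻¹
          rw [← mul_assoc, ← mul_assoc, inv_mul_cancel₀ hg, one_mul]
      refine Set.Finite.subset (Set.Finite.insert _ ?_) hsub
      exact ih q.natDegree (by omega) q hqne rfl
    · push_neg at hroot
      have : {a : D | p.IsRoot a} = ∅ := by
        ext a
        simpa [Polynomial.IsRoot] using hroot a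
      rw [this]
      simp

/-- If an infinite division ring `D` has infinitely many conjugacy classes, then the
image of any nonconstant polynomial `p ∈ D[x]` evaluated on `D` is infinite. -/
theorem image_of_nonconstant_polynomial_infinite (D : Type*) [DivisionRing D]
    [Infinite D] [Infinite (ConjClasses D)]
    (p : Polynomial D) (hp : 0 < p.degree) :
    (Set.range fun a : D => p.eval a).Infinite := by
  by_contra hfin
  rw [Set.not_infinite] at hfin
  have hne : ∀ v : D, p - C v ≠ 0 := by
    intro v h
    rw [sub_eq_zero] at h
    rw [h] at hp
    exact absurd hp (not_lt.mpr Polynomial.degree_C_le)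
  have huniv : (Set.univ : Set (ConjClasses D)) ⊆
      ⋃ v ∈ Set.range fun a : D => p.eval a,
        ConjClasses.mk '' {a : D | (p - C v).IsRoot a} := by
    intro x _
    obtain ⟨a, rfl⟩ := ConjClasses.mk_surjective x
    refine Set.mem_biUnion ⟨a, rfl⟩ ⟨a, ?_, rfl⟩
    simp [Polynomial.IsRoot]
  have hfin2 : (Set.univ : Set (ConjClasses D)).Finite := by
    refine Set.Finite.subset (Set.Finite.biUnion hfin fun v _ => ?_) huniv
    exact gordon_motzkin (p - C v).natDegree (p - C v) (hne v) rfl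
  exact Set.infinite_univ hfin2
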